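/- Fix p ∈ (1,∞). Define α : ℝ × [0,∞) × [0,∞) → [0,∞] by α(j,r,s) = (max(j,0))^p / m(r,s)^{p-1} when m(r,s) > 0, α(j,r,s) = 0 if max(j,0) = 0 = m(r,s), and α(j,r,s) = ∞ if max(j,0) > 0 and m(r,s) = 0, where m : [0,∞)² → [0,∞) is concave and continuous. Then α is jointly convex in (j,r,s). -/

import Mathlib

open ENNReal

/-- The density function `α(j,r,s) = (j₊)^p / m(r,s)^{p-1}`, with the conventions
`0/0 = 0` and `a/0 = ∞` for `a > 0`, valued in the extended nonnegative reals. -/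
noncomputable def alphaFn (p : ℝ) (m : ℝ → ℝ → ℝ) (j r s : ℝ) : ℝ≥0∞ :=
  if 0 < m r s then ENNReal.ofReal (max j 0 ^ p / m r s ^ (p - 1))
  else if max j 0 = 0 then 0 else ⊤

/-- Tangent-line (Young) inequality for the function `x^p / y^(p-1)`. -/
lemma tangent_ineq (p : ℝ) (hp : 1 < p) {x y l : ℝ} (hx : 0 ≤ x) (hy : 0 < y)
    (hl : 0 ≤ l) :
    p * l ^ (p - 1) * x - (p - 1) * l ^ p * y ≤ x ^ p / y ^ (p - 1) := by
  have hp0 : 0 < p := lt_trans one_pos hp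
  have hp1 : 0 < p - 1 := by linarith
  have hq : p.HolderConjugate (p / (p - 1)) := Real.HolderConjugate.conjExponent hp
  set e : ℝ := (p - 1) / p with he
  have hyp : (0:ℝ) < y ^ e := Real.rpow_pos_of_pos hy e
  have ha : 0 ≤ x / y ^ e := div_nonneg hx hyp.le
  have hb : 0 ≤ l ^ (p - 1) * y ^ e := mul_nonneg (Real.rpow_nonneg hl _) hyp.le
  have hY := Real.young_inequality_of_nonneg ha hb hq
  have hab : x / y ^ e * (l ^ (p - 1) * y ^ e) = l ^ (p - 1) * x := by
    field_simp
  have hap : (x / y ^ e) ^ p = x ^ p / y ^ (p - 1) := by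
    rw [Real.div_rpow hx hyp.le, ← Real.rpow_mul hy.le]
    congr 1
    rw [he]; field_simp
  have hbq : (l ^ (p - 1) * y ^ e) ^ (p / (p - 1)) = l ^ p * y := by
    rw [Real.mul_rpow (Real.rpow_nonneg hl _) hyp.le, ← Real.rpow_mul hl,
      ← Real.rpow_mul hy.le]
    have h1 : (p - 1) * (p / (p - 1)) = p := by field_simp
    have h2 : e * (p / (p - 1)) = 1 := by rw [he]; field_simp
    rw [h1, h2, Real.rpow_one]
  rw [hab, hap, hbq] at hY
  have h3 : l ^ p * y / (p / (p - 1)) = (p - 1) / p * (l ^ p * y) := by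
    field_simp
  rw [h3] at hY
  have h := mul_le_mul_of_nonneg_left hY hp0.le
  have e1 : p * (x ^ p / y ^ (p - 1) / p + (p - 1) / p * (l ^ p * y))
      = x ^ p / y ^ (p - 1) + (p - 1) * (l ^ p * y) := by
    field_simp
  rw [e1] at h
  nlinarith [h]

/-- Joint convexity of `(a, c) ↦ a^p / c^(p-1)` for `a ≥ 0`, `c > 0`. -/
lemma key_convex (p : ℝ) (hp : 1 < p) {a b c d τ : ℝ}
    (ha : 0 ≤ a) (hb : 0 ≤ b) (hc : 0 < c) (hd : 0 < d) (hτ0 : 0 ≤ τ) (hτ1 : τ ≤ 1) :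
    ((1 - τ) * a + τ * b) ^ p / ((1 - τ) * c + τ * d) ^ (p - 1)
      ≤ (1 - τ) * (a ^ p / c ^ (p - 1)) + τ * (b ^ p / d ^ (p - 1)) := by
  have h1τ : 0 ≤ 1 - τ := by linarith
  set X : ℝ := (1 - τ) * a + τ * b with hX
  set Y : ℝ := (1 - τ) * c + τ * d with hY
  have hXnn : 0 ≤ X := by positivity
  have hYpos : 0 < Y := by
    rcases eq_or_lt_of_le hτ0 with h | h
    · simp only [hY, ← h]; linarith
    · have h2 := mul_nonneg h1τ hc.le
      have h3 := mul_pos h hd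
      simp only [hY]; linarith
  have hp1 : 0 < p - 1 := by linarith
  rcases eq_or_lt_of_le hXnn with hX0 | hXpos
  · rw [← hX0, Real.zero_rpow (by positivity : p ≠ 0), zero_div]
    have r1 : 0 ≤ a ^ p / c ^ (p - 1) := by positivity
    have r2 : 0 ≤ b ^ p / d ^ (p - 1) := by positivity
    positivity
  · set l : ℝ := X / Y with hl
    have hlpos : 0 < l := div_pos hXpos hYpos
    have hXp : X ^ (p - 1) * X = X ^ p := by
      rw [← Real.rpow_add_one hXpos.ne' (p - 1)]; ring_nf
    have hYp : Y ^ (p - 1) * Y = Y ^ p := by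
      rw [← Real.rpow_add_one hYpos.ne' (p - 1)]; ring_nf
    have hYp1 : (0:ℝ) < Y ^ (p - 1) := Real.rpow_pos_of_pos hYpos _
    have hYpp : (0:ℝ) < Y ^ p := Real.rpow_pos_of_pos hYpos _
    have h1 : X ^ (p - 1) / Y ^ (p - 1) * X = X ^ p / Y ^ (p - 1) := by
      rw [div_mul_eq_mul_div, hXp]
    have h2 : X ^ p / Y ^ p * Y = X ^ p / Y ^ (p - 1) := by
      rw [← hYp]; field_simp
    have key : X ^ p / Y ^ (p - 1) = p * l ^ (p - 1) * X - (p - 1) * l ^ p * Y := by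
      rw [hl, Real.div_rpow hXpos.le hYpos.le, Real.div_rpow hXpos.le hYpos.le,
        mul_assoc p, h1, mul_assoc (p - 1), h2]
      ring
    rw [key]
    have t0 := tangent_ineq p hp ha hc hlpos.le
    have t1 := tangent_ineq p hp hb hd hlpos.le
    have e0 := mul_le_mul_of_nonneg_left t0 h1τ
    have e1 := mul_le_mul_of_nonneg_left t1 hτ0
    calc p * l ^ (p - 1) * X - (p - 1) * l ^ p * Y
        = (1 - τ) * (p * l ^ (p - 1) * a - (p - 1) * l ^ p * c)
          + τ * (p * l ^ (p - 1) * b - (p - 1) * l ^ p * d) := by rw [hX, hY]; ring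
      _ ≤ (1 - τ) * (a ^ p / c ^ (p - 1)) + τ * (b ^ p / d ^ (p - 1)) :=
          add_le_add e0 e1

/-- For `p ∈ (1,∞)` and a concave continuous mobility `m` on `[0,∞)²`,
the density function `α` is jointly convex in `(j,r,s)` on `ℝ × [0,∞) × [0,∞)`,
with the convex combination inequality computed in the extended reals. -/
theorem alphaFn_jointly_convex
    (p : ℝ) (hp : 1 < p)
    (m : ℝ → ℝ → ℝ)
    (hconc : ConcaveOn ℝ (Set.Ici 0 ×ˢ Set.Ici 0) (fun z : ℝ × ℝ => m z.1 z.2))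
    (hcont : ContinuousOn (fun z : ℝ × ℝ => m z.1 z.2) (Set.Ici 0 ×ˢ Set.Ici 0))
    (hnonneg : ∀ r s : ℝ, 0 ≤ r → 0 ≤ s → 0 ≤ m r s) :
    ∀ τ ∈ Set.Icc (0:ℝ) 1, ∀ j₀ r₀ s₀ j₁ r₁ s₁ : ℝ,
      0 ≤ r₀ → 0 ≤ s₀ → 0 ≤ r₁ → 0 ≤ s₁ →
      alphaFn p m ((1 - τ) * j₀ + τ * j₁) ((1 - τ) * r₀ + τ * r₁) ((1 - τ) * s₀ + τ * s₁)
        ≤ ENNReal.ofReal (1 - τ) * alphaFn p m j₀ r₀ s₀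
          + ENNReal.ofReal τ * alphaFn p m j₁ r₁ s₁ := by
  rintro τ ⟨hτ0, hτ1⟩ j₀ r₀ s₀ j₁ r₁ s₁ hr₀ hs₀ hr₁ hs₁
  have hp0 : 0 < p := lt_trans one_pos hp
  have hp1 : 0 < p - 1 := by linarith
  rcases eq_or_lt_of_le hτ0 with h0 | hτpos
  · simp [← h0]
  rcases eq_or_lt_of_le hτ1 with h1 | hτlt
  · simp [h1]
  have h1τ : 0 < 1 - τ := by linarith
  set a : ℝ := max j₀ 0 with hadef
  set b : ℝ := max j₁ 0 with hbdef
  have ha : 0 ≤ a := le_max_right _ _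
  have hb : 0 ≤ b := le_max_right _ _
  set c : ℝ := m r₀ s₀ with hcdef
  set d : ℝ := m r₁ s₁ with hddef
  have hc0 : 0 ≤ c := hnonneg _ _ hr₀ hs₀
  have hd0 : 0 ≤ d := hnonneg _ _ hr₁ hs₁
  set M : ℝ := m ((1 - τ) * r₀ + τ * r₁) ((1 - τ) * s₀ + τ * s₁) with hMdef
  have hMge : (1 - τ) * c + τ * d ≤ M := by
    have := hconc.2 (Set.mk_mem_prod hr₀ hs₀) (Set.mk_mem_prod hr₁ hs₁)
      (le_of_lt h1τ) hτ0 (by ring)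
    simpa [Prod.smul_mk, smul_eq_mul] using this
  set X : ℝ := max ((1 - τ) * j₀ + τ * j₁) 0 with hXdef
  have hXnn : 0 ≤ X := le_max_right _ _
  have hXle : X ≤ (1 - τ) * a + τ * b := by
    apply max_le
    · have h1 : j₀ ≤ a := le_max_left _ _
      have h2 : j₁ ≤ b := le_max_left _ _
      nlinarith
    · positivity
  by_cases hc : 0 < c
  · by_cases hd : 0 < d
    · -- both positive: main case
      have hM : 0 < M :=
        lt_of_lt_of_le (by nlinarith [mul_pos h1τ hc, mul_pos hτpos hd]) hMge
      have hkey := key_convex p hp ha hb hc hd hτ0 hτ1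
      have hYpos : 0 < (1 - τ) * c + τ * d := by
        nlinarith [mul_pos h1τ hc, mul_pos hτpos hd]
      have hchain : X ^ p / M ^ (p - 1)
          ≤ (1 - τ) * (a ^ p / c ^ (p - 1)) + τ * (b ^ p / d ^ (p - 1)) := by
        refine le_trans ?_ hkey
        exact div_le_div₀ (by positivity) (Real.rpow_le_rpow hXnn hXle hp0.le)
          (by positivity) (Real.rpow_le_rpow hYpos.le hMge hp1.le)
      rw [alphaFn, if_pos hM, alphaFn, if_pos hc, alphaFn, if_pos hd,
        ← ENNReal.ofReal_mul h1τ.le, ← ENNReal.ofReal_mul hτ0,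
        ← ENNReal.ofReal_add (by positivity) (by positivity)]
      exact ENNReal.ofReal_le_ofReal hchain
    · -- d = 0
      have hdz : d = 0 := le_antisymm (not_lt.mp hd) hd0
      by_cases hbz : b = 0
      · have hα₁ : alphaFn p m j₁ r₁ s₁ = 0 := by
          rw [alphaFn, if_neg hd, if_pos hbz]
        have hMge' : (1 - τ) * c ≤ M := by rw [hdz] at hMge; linarith
        have hM : 0 < M := lt_of_lt_of_le (mul_pos h1τ hc) hMge'
        have hXle' : X ≤ (1 - τ) * a := by rw [hbz] at hXle; linarith
        have hchain : X ^ p / M ^ (p - 1) ≤ (1 - τ) * (a ^ p / c ^ (p - 1)) := by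
          have step : X ^ p / M ^ (p - 1)
              ≤ ((1 - τ) * a) ^ p / ((1 - τ) * c) ^ (p - 1) :=
            div_le_div₀ (by positivity) (Real.rpow_le_rpow hXnn hXle' hp0.le)
              (by positivity) (Real.rpow_le_rpow (by positivity) hMge' hp1.le)
          refine le_trans step (le_of_eq ?_)
          rw [Real.mul_rpow h1τ.le ha, Real.mul_rpow h1τ.le hc.le,
            show (1 - τ) ^ p = (1 - τ) ^ (p - 1) * (1 - τ) by
              rw [← Real.rpow_add_one h1τ.ne' (p - 1)]; ring_nf]
          have hn1 : ((1 - τ) : ℝ) ^ (p - 1) ≠ 0 := (Real.rpow_pos_of_pos h1τ _).ne'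
          have hn2 : (c : ℝ) ^ (p - 1) ≠ 0 := (Real.rpow_pos_of_pos hc _).ne'
          field_simp
        rw [hα₁, mul_zero, add_zero, alphaFn, if_pos hM, alphaFn, if_pos hc,
          ← ENNReal.ofReal_mul h1τ.le]
        exact ENNReal.ofReal_le_ofReal hchain
      · have hα₁ : alphaFn p m j₁ r₁ s₁ = ⊤ := by
          rw [alphaFn, if_neg hd, if_neg hbz]
        rw [hα₁, ENNReal.mul_top (by simpa [ENNReal.ofReal_eq_zero] using hτpos.not_ge)]
        simp
  · -- c = 0
    have hcz : c = 0 := le_antisymm (not_lt.mp hc) hc0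
    by_cases haz : a = 0
    · by_cases hd : 0 < d
      · have hα₀ : alphaFn p m j₀ r₀ s₀ = 0 := by
          rw [alphaFn, if_neg hc, if_pos haz]
        have hMge' : τ * d ≤ M := by rw [hcz] at hMge; linarith
        have hM : 0 < M := lt_of_lt_of_le (mul_pos hτpos hd) hMge'
        have hXle' : X ≤ τ * b := by rw [haz] at hXle; linarith
        have hchain : X ^ p / M ^ (p - 1) ≤ τ * (b ^ p / d ^ (p - 1)) := by
          have step : X ^ p / M ^ (p - 1) ≤ (τ * b) ^ p / (τ * d) ^ (p - 1) :=
            div_le_div₀ (by positivity) (Real.rpow_le_rpow hXnn hXle' hp0.le)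
              (by positivity) (Real.rpow_le_rpow (by positivity) hMge' hp1.le)
          refine le_trans step (le_of_eq ?_)
          rw [Real.mul_rpow hτ0 hb, Real.mul_rpow hτ0 hd.le,
            show τ ^ p = τ ^ (p - 1) * τ by
              rw [← Real.rpow_add_one hτpos.ne' (p - 1)]; ring_nf]
          have hn1 : (τ : ℝ) ^ (p - 1) ≠ 0 := (Real.rpow_pos_of_pos hτpos _).ne'
          have hn2 : (d : ℝ) ^ (p - 1) ≠ 0 := (Real.rpow_pos_of_pos hd _).ne'
          field_simp
        rw [hα₀, mul_zero, zero_add, alphaFn, if_pos hM, alphaFn, if_pos hd,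
          ← ENNReal.ofReal_mul hτ0]
        exact ENNReal.ofReal_le_ofReal hchain
      · have hdz : d = 0 := le_antisymm (not_lt.mp hd) hd0
        by_cases hbz : b = 0
        · have hXz : X = 0 := by
            have : X ≤ 0 := by rw [haz, hbz] at hXle; linarith
            linarith
          have hL : alphaFn p m ((1 - τ) * j₀ + τ * j₁)
              ((1 - τ) * r₀ + τ * r₁) ((1 - τ) * s₀ + τ * s₁) = 0 := by
            have hXz' : max ((1 - τ) * j₀ + τ * j₁) 0 = 0 := hXz
            rw [alphaFn, hXz']
            split_ifs with hM h0
            · rw [Real.zero_rpow hp0.ne', zero_div, ENNReal.ofReal_zero]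
            · rfl
            · exact absurd rfl h0
          rw [hL]
          exact bot_le
        · have hα₁ : alphaFn p m j₁ r₁ s₁ = ⊤ := by
            rw [alphaFn, if_neg hd, if_neg hbz]
          rw [hα₁, ENNReal.mul_top (by simpa [ENNReal.ofReal_eq_zero] using hτpos.not_ge)]
          simp
    · have hα₀ : alphaFn p m j₀ r₀ s₀ = ⊤ := by
        rw [alphaFn, if_neg hc, if_neg haz]
      rw [hα₀, ENNReal.mul_top (by simpa [ENNReal.ofReal_eq_zero] using h1τ.not_ge)]
      simp
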